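/- Let ν_{N,k} be the probability measure on Fin r with ν({m}) = k_m/N, and let K be the r×r matrix with (N−1)K_{m,n} = k_n − 1 if n = m and (N−1)K_{m,n} = k_n if n ≠ m. Then for functions g, h : Fin r → ℝ, ⟨g, K h⟩_{L²(ν)} = Σ_{x ∈ V_{N,k}} g(x_1) h(x_N) μ_{N,k}(x), where μ_{N,k} is the uniform probability measure on the multislice V_{N,k} and N ≥ 2. -/

import Mathlib

open scoped Classical BigOperators

/-- The multislice: tuples `x : Fin N → Fin r` in which each value `m` is
attained exactly `k m` times. -/
def multislice (N r : ℕ) (k : Fin r → ℕ) : Finset (Fin N → Fin r) :=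
  Finset.univ.filter fun x => ∀ m : Fin r,
    (Finset.univ.filter fun ℓ => x ℓ = m).card = k m

/-- The matrix `K`: `(N-1) K m n = k n - 1` if `n = m`, and `k n` otherwise. -/
noncomputable def Kmat (N r : ℕ) (k : Fin r → ℕ) : Fin r → Fin r → ℝ :=
  fun m n => (if n = m then (k n : ℝ) - 1 else (k n : ℝ)) / (N - 1)

open Finset

lemma mem_multislice_iff {N r : ℕ} {k : Fin r → ℕ} {x : Fin N → Fin r} :
    x ∈ multislice N r k ↔ ∀ m : Fin r,
      (Finset.univ.filter fun ℓ => x ℓ = m).card = k m := by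
  simp [multislice]

lemma comp_perm_mem_multislice {N r : ℕ} {k : Fin r → ℕ} {x : Fin N → Fin r}
    (hx : x ∈ multislice N r k) (σ : Equiv.Perm (Fin N)) :
    x ∘ σ ∈ multislice N r k := by
  rw [mem_multislice_iff] at hx ⊢
  intro m
  rw [← hx m]
  apply Finset.card_bij (fun i _ => σ i)
  · intro a ha
    simp only [mem_filter, mem_univ, true_and, Function.comp_apply] at ha ⊢
    exact ha
  · intro a _ b _ hab; exact σ.injective hab
  · intro b hb
    refine ⟨σ⁻¹ b, ?_, by simp⟩
    simp only [mem_filter, mem_univ, true_and, Function.comp_apply] at hb ⊢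
    simpa using hb

lemma list_mem_multislice (r : ℕ) (l : List (Fin r)) :
    (fun i => l.get i) ∈ multislice l.length r (fun m => l.count m) := by
  rw [mem_multislice_iff]
  intro m
  classical
  have aux : ∀ l' : List (Fin r), l'.count m = (l'.map fun a => if a = m then 1 else 0).sum := by
    intro l'
    induction l' with
    | nil => simp
    | cons a t ih =>
      simp [List.count_cons, ih, beq_iff_eq]
      omega
  rw [Finset.card_filter, Fin.sum_univ_def, aux]
  conv_rhs => rw [← List.map_get_finRange l, List.map_map]
  rfl

lemma multislice_nonempty {N r : ℕ} {k : Fin r → ℕ} (hk : ∑ m, k m = N) :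
    (multislice N r k).Nonempty := by
  classical
  set l : List (Fin r) := (List.finRange r).flatMap (fun m => List.replicate (k m) m) with hl
  have hlen : l.length = N := by
    rw [hl, List.length_flatMap, ← hk, Fin.sum_univ_def]
    simp [Function.comp_def]
  have hcount : (fun m => l.count m) = k := by
    funext m
    rw [hl, List.count_flatMap]
    have : ∑ m', (if m' = m then k m' else 0) = k m := by simp
    rw [← this, Fin.sum_univ_def]
    apply congrArg
    apply List.map_congr_left
    intro m' _
    simp only [Function.comp_apply, List.count_replicate]
    by_cases h : m' = m <;> simp [h, beq_iff_eq]
  subst hlen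
  rw [← hcount]
  exact ⟨_, list_mem_multislice r l⟩

lemma filter_comp_perm_card (N r : ℕ) (k : Fin r → ℕ) (σ : Equiv.Perm (Fin N))
    (p : (Fin N → Fin r) → Prop) [DecidablePred p] :
    ((multislice N r k).filter fun x => p (x ∘ σ)).card
      = ((multislice N r k).filter p).card := by
  classical
  apply Finset.card_bij (fun x _ => x ∘ σ)
  · intro x hx
    simp only [Finset.mem_filter] at hx ⊢
    exact ⟨comp_perm_mem_multislice hx.1 σ, hx.2⟩
  · intro x _ y _ hxy
    funext i
    have := congrFun hxy (σ⁻¹ i)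
    simpa using this
  · intro y hy
    simp only [Finset.mem_filter] at hy
    refine ⟨y ∘ σ.symm, ?_, ?_⟩
    · simp only [Finset.mem_filter]
      have h1 : (y ∘ ⇑σ.symm) ∘ ⇑σ = y := by funext i; simp
      exact ⟨comp_perm_mem_multislice hy.1 σ.symm, by rw [h1]; exact hy.2⟩
    · funext i; simp

lemma claimA (N r : ℕ) (k : Fin r → ℕ) (i0 : Fin N) (m : Fin r) :
    N * ((multislice N r k).filter fun x => x i0 = m).card
      = k m * (multislice N r k).card := by
  classical
  have h1 : ∀ i : Fin N, ((multislice N r k).filter fun x => x i = m).card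
      = ((multislice N r k).filter fun x => x i0 = m).card := by
    intro i
    have := filter_comp_perm_card N r k (Equiv.swap i i0) (fun x => x i0 = m)
    simpa [Function.comp, Equiv.swap_apply_right] using this
  have h2 : ∑ i : Fin N, ((multislice N r k).filter fun x => x i = m).card
      = N * ((multislice N r k).filter fun x => x i0 = m).card := by
    rw [Finset.sum_congr rfl fun i _ => h1 i, Finset.sum_const, Finset.card_univ,
      Fintype.card_fin, smul_eq_mul]
  rw [← h2]
  have h3 : ∑ i : Fin N, ((multislice N r k).filter fun x => x i = m).card
      = ∑ x ∈ multislice N r k, ((Finset.univ.filter fun i => x i = m).card) := by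
    simp only [Finset.card_filter]
    rw [Finset.sum_comm]
  rw [h3]
  rw [Finset.sum_congr rfl fun x hx => (mem_multislice_iff.1 hx) m, Finset.sum_const,
    smul_eq_mul]
  exact Nat.mul_comm _ _

lemma claimB (N r : ℕ) (k : Fin r → ℕ) (i0 iN : Fin N) (hne : i0 ≠ iN) (m n : Fin r) :
    (N - 1) * ((multislice N r k).filter fun x => x i0 = m ∧ x iN = n).card
      = ((multislice N r k).filter fun x => x i0 = m).card
        * (k n - if n = m then 1 else 0) := by
  classical
  have h1 : ∀ i : Fin N, i ≠ i0 →
      ((multislice N r k).filter fun x => x i0 = m ∧ x i = n).card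
      = ((multislice N r k).filter fun x => x i0 = m ∧ x iN = n).card := by
    intro i hi
    have := filter_comp_perm_card N r k (Equiv.swap i iN)
      (fun x => x i0 = m ∧ x iN = n)
    rw [← this]
    congr 1
    apply Finset.filter_congr
    intro x _
    have hswap0 : Equiv.swap i iN i0 = i0 :=
      Equiv.swap_apply_of_ne_of_ne (Ne.symm hi) hne
    simp [Function.comp, hswap0, Equiv.swap_apply_right]
  have h2 : ∑ i ∈ Finset.univ.erase i0,
      ((multislice N r k).filter fun x => x i0 = m ∧ x i = n).card
      = (N - 1) * ((multislice N r k).filter fun x => x i0 = m ∧ x iN = n).card := by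
    rw [Finset.sum_congr rfl fun i hi => h1 i (Finset.ne_of_mem_erase hi),
      Finset.sum_const, Finset.card_erase_of_mem (Finset.mem_univ i0),
      Finset.card_univ, Fintype.card_fin, smul_eq_mul]
  rw [← h2]
  have h3 : ∀ i : Fin N, ((multislice N r k).filter fun x => x i0 = m ∧ x i = n).card
      = ∑ x ∈ (multislice N r k).filter fun x => x i0 = m,
          (if x i = n then 1 else 0) := by
    intro i
    rw [← Finset.card_filter, Finset.filter_filter]
  have h4 : ∀ x ∈ (multislice N r k).filter fun x => x i0 = m,
      ((Finset.univ.erase i0).filter fun i => x i = n).card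
        = k n - if n = m then 1 else 0 := by
    intro x hx
    rw [Finset.mem_filter] at hx
    rw [Finset.filter_erase]
    by_cases hnm : n = m
    · rw [Finset.card_erase_of_mem (by simp [hx.2, hnm]),
        (mem_multislice_iff.1 hx.1) n]
      simp [hnm]
    · rw [Finset.erase_eq_of_notMem (by simp [hx.2]; exact fun hh => hnm hh.symm),
        (mem_multislice_iff.1 hx.1) n]
      simp [hnm]
  calc ∑ i ∈ Finset.univ.erase i0,
        ((multislice N r k).filter fun x => x i0 = m ∧ x i = n).card
      = ∑ i ∈ Finset.univ.erase i0, ∑ x ∈ (multislice N r k).filter fun x => x i0 = m,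
          (if x i = n then 1 else 0) := Finset.sum_congr rfl fun i _ => h3 i
    _ = ∑ x ∈ (multislice N r k).filter fun x => x i0 = m,
          ((Finset.univ.erase i0).filter fun i => x i = n).card := by
        rw [Finset.sum_comm]
        exact Finset.sum_congr rfl fun x _ => (Finset.card_filter _ _).symm
    _ = ∑ x ∈ (multislice N r k).filter fun x => x i0 = m,
          (k n - if n = m then 1 else 0) := Finset.sum_congr rfl h4
    _ = _ := by rw [Finset.sum_const, smul_eq_mul]

/-- The quadratic form of `K` on `L²(ν)` (with `ν {m} = k m / N`) equals the
correlation `∑_x g(x_1) h(x_N) μ_{N,k}(x)` under the uniform measure on the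
multislice. -/
theorem Kmat_quadratic_form (N r : ℕ) (hN : 2 ≤ N) (k : Fin r → ℕ)
    (hk : ∑ m, k m = N) (hpos : ∀ m, 1 ≤ k m) (g h : Fin r → ℝ) :
    ∑ m, g m * (∑ n, Kmat N r k m n * h n) * ((k m : ℝ) / N)
      = ∑ x ∈ multislice N r k,
          g (x ⟨0, by omega⟩) * h (x ⟨N - 1, by omega⟩)
            * ((multislice N r k).card : ℝ)⁻¹ := by
  classical
  have h0 : (0 : ℕ) < N := by omega
  have hN1 : N - 1 < N := by omega
  set i0 : Fin N := ⟨0, h0⟩ with hi0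
  set iN : Fin N := ⟨N - 1, hN1⟩ with hiN
  have hne : i0 ≠ iN := by
    have hval : (i0 : ℕ) ≠ (iN : ℕ) := by show 0 ≠ N - 1; omega
    exact fun hh => hval (congrArg Fin.val hh)
  set V := multislice N r k with hV
  have hVne : V.Nonempty := multislice_nonempty hk
  have hVcard : (V.card : ℝ) ≠ 0 := by
    exact_mod_cast Finset.card_ne_zero_of_mem hVne.choose_spec
  have hNR : (N : ℝ) ≠ 0 := by positivity
  have hN1R : (N : ℝ) - 1 ≠ 0 := by
    have : (2 : ℝ) ≤ (N : ℝ) := by exact_mod_cast hN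
    linarith
  -- RHS rewriting
  have hRHS : ∑ x ∈ V, g (x i0) * h (x iN) * ((V.card : ℝ))⁻¹
      = ∑ m, ∑ n, g m * h n
          * (((V.filter fun x => x i0 = m ∧ x iN = n).card : ℝ) * ((V.card : ℝ))⁻¹) := by
    have step1 : ∀ x ∈ V, g (x i0) * h (x iN) * ((V.card : ℝ))⁻¹
        = ∑ m, ∑ n, if x i0 = m ∧ x iN = n
            then g m * h n * ((V.card : ℝ))⁻¹ else 0 := by
      intro x _
      rw [Finset.sum_comm]
      have inner : ∀ n, (∑ m, if x i0 = m ∧ x iN = n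
            then g m * h n * ((V.card : ℝ))⁻¹ else 0)
          = if x iN = n then g (x i0) * h n * ((V.card : ℝ))⁻¹ else 0 := by
        intro n
        by_cases hn : x iN = n
        · simp only [hn, and_true]
          rw [Finset.sum_ite_eq Finset.univ (x i0)
            (fun m => g m * h n * ((V.card : ℝ))⁻¹)]
          simp
        · simp [hn]
      rw [Finset.sum_congr rfl fun n _ => inner n,
        Finset.sum_ite_eq Finset.univ (x iN)
          (fun n => g (x i0) * h n * ((V.card : ℝ))⁻¹)]
      simp
    rw [Finset.sum_congr rfl step1, Finset.sum_comm]
    refine Finset.sum_congr rfl fun m _ => ?_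
    rw [Finset.sum_comm]
    refine Finset.sum_congr rfl fun n _ => ?_
    rw [← Finset.sum_filter, Finset.sum_const, nsmul_eq_mul]
    ring
  -- key per-term identity
  have key : ∀ m n : Fin r, Kmat N r k m n * ((k m : ℝ) / N)
      = ((V.filter fun x => x i0 = m ∧ x iN = n).card : ℝ) * ((V.card : ℝ))⁻¹ := by
    intro m n
    have hA := claimA N r k i0 m
    have hB := claimB N r k i0 iN hne m n
    have hcast : ((k n - if n = m then 1 else 0 : ℕ) : ℝ)
        = (k n : ℝ) - if n = m then 1 else 0 := by
      rcases eq_or_ne n m with hnm | hnm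
      · subst hnm
        rw [if_pos rfl, if_pos rfl, Nat.cast_sub (hpos n), Nat.cast_one]
      · simp [hnm]
    have hB' : ((N : ℝ) - 1) * ((V.filter fun x => x i0 = m ∧ x iN = n).card : ℝ)
        = ((V.filter fun x => x i0 = m).card : ℝ)
          * ((k n : ℝ) - if n = m then 1 else 0) := by
      have h1N : 1 ≤ N := Nat.le_of_succ_le hN
      have hcN : ((N - 1 : ℕ) : ℝ) = (N : ℝ) - 1 := by
        rw [Nat.cast_sub h1N, Nat.cast_one]
      have := congrArg (Nat.cast : ℕ → ℝ) hB
      rw [Nat.cast_mul, Nat.cast_mul, hcN, hcast] at this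
      exact this
    have hA' : (N : ℝ) * ((V.filter fun x => x i0 = m).card : ℝ)
        = (k m : ℝ) * (V.card : ℝ) := by exact_mod_cast hA
    have hcomb : (N : ℝ) * ((N : ℝ) - 1)
          * ((V.filter fun x => x i0 = m ∧ x iN = n).card : ℝ)
        = (k m : ℝ) * ((k n : ℝ) - if n = m then 1 else 0) * (V.card : ℝ) := by
      linear_combination (N : ℝ) * hB'
        + ((k n : ℝ) - if n = m then 1 else 0) * hA'
    rw [Kmat]
    have hif : (if n = m then (k n : ℝ) - 1 else (k n : ℝ))
        = (k n : ℝ) - if n = m then 1 else 0 := by split <;> ring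
    rw [hif]
    rw [div_mul_div_comm, ← div_eq_mul_inv,
      div_eq_div_iff (mul_ne_zero hN1R hNR) hVcard]
    linear_combination -hcomb
  calc ∑ m, g m * (∑ n, Kmat N r k m n * h n) * ((k m : ℝ) / N)
      = ∑ m, ∑ n, g m * h n * (Kmat N r k m n * ((k m : ℝ) / N)) := by
        refine Finset.sum_congr rfl fun m _ => ?_
        rw [Finset.mul_sum, Finset.sum_mul]
        exact Finset.sum_congr rfl fun n _ => by ring
    _ = ∑ m, ∑ n, g m * h n
          * (((V.filter fun x => x i0 = m ∧ x iN = n).card : ℝ) * ((V.card : ℝ))⁻¹) := by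
        exact Finset.sum_congr rfl fun m _ => Finset.sum_congr rfl fun n _ => by rw [key]
    _ = ∑ x ∈ V, g (x i0) * h (x iN) * ((V.card : ℝ))⁻¹ := hRHS.symm
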